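/- Suppose 𝒱 = {V_s}_{s∈S} (S well-ordered) is an open cover of X and {𝒰_n}_{n≥1} is a sequence of open covers of X such that for each x ∈ V_s there exists n with st(x,𝒰_n) ⊆ V_s. Then the union over n of the discretizations D(𝒱,𝒰_n) covers X. -/

import Mathlib

noncomputable section
open Set Topology TopologicalSpace Classical

/-- `𝒰` is an open cover of `X`. -/
def IsOpenCover {X : Type} [TopologicalSpace X] (𝒰 : Set (Set X)) : Prop :=
  (∀ U ∈ 𝒰, IsOpen U) ∧ ⋃₀ 𝒰 = univ

/-- Star of a point with respect to a family of sets. -/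
def ptStar {X : Type} (x : X) (𝒰 : Set (Set X)) : Set X := ⋃₀ {U | U ∈ 𝒰 ∧ x ∈ U}

/-- Star of a set with respect to a family of sets. -/
def setStar {X : Type} (A : Set X) (𝒰 : Set (Set X)) : Set X :=
  ⋃₀ {U | U ∈ 𝒰 ∧ (U ∩ A).Nonempty}

/-- `𝒱` star-refines `𝒰`. -/
def StarRefines {X : Type} (𝒱 𝒰 : Set (Set X)) : Prop :=
  ∀ x : X, ∃ U ∈ 𝒰, ptStar x 𝒱 ⊆ U

/-- A continuous partition of unity viewed as a map into `l¹(S)` with image in `Δ(S)`. -/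
def IsPU {X S : Type} [TopologicalSpace X] (f : X → lp (fun _ : S => ℝ) 1) : Prop :=
  Continuous f ∧ ∀ x : X, (∀ s : S, 0 ≤ f x s) ∧ HasSum (fun s => f x s) 1

/-- The partition of unity `f` is `𝒰`-small: each carrier lies in a member of `𝒰`. -/
def IsUSmall {X S : Type} [TopologicalSpace X] (𝒰 : Set (Set X))
    (f : X → lp (fun _ : S => ℝ) 1) : Prop :=
  ∀ s : S, ∃ U ∈ 𝒰, {x : X | f x s ≠ 0} ⊆ U

/-- There exists a `𝒰`-small partition of unity on `X`. -/
def ExistsUSmallPU {X : Type} [TopologicalSpace X] (𝒰 : Set (Set X)) : Prop :=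
  ∃ (S : Type) (f : X → lp (fun _ : S => ℝ) 1), IsPU f ∧ IsUSmall 𝒰 f

/-- An indexed family of sets is discrete. -/
def DiscreteFam {X S : Type} [TopologicalSpace X] (A : S → Set X) : Prop :=
  ∀ x : X, ∃ N ∈ nhds x, {s : S | (A s ∩ N).Nonempty}.Subsingleton

/-- A family of sets (as a set of sets) is discrete. -/
def DiscreteSetFam {X : Type} [TopologicalSpace X] (𝒜 : Set (Set X)) : Prop :=
  ∀ x : X, ∃ N ∈ nhds x, {A | A ∈ 𝒜 ∧ (A ∩ N).Nonempty}.Subsingleton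

/-- `𝒰` has a σ-discrete closed refinement. -/
def HasSigmaDiscreteClosedRefinement {X : Type} [TopologicalSpace X]
    (𝒰 : Set (Set X)) : Prop :=
  ∃ D : ℕ → Set (Set X), (∀ n, DiscreteSetFam (D n)) ∧
    (∀ n, ∀ F ∈ D n, IsClosed F) ∧
    (∀ n, ∀ F ∈ D n, ∃ U ∈ 𝒰, F ⊆ U) ∧
    ⋃₀ (⋃ n, D n) = univ

/-- `X` is collectionwise normal. -/
def CwNormal (X : Type) [TopologicalSpace X] : Prop :=
  ∀ (S : Type) (A : S → Set X), (∀ s, IsClosed (A s)) → DiscreteFam A →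
    ∃ V : S → Set X, (∀ s, IsOpen (V s)) ∧ (∀ s, A s ⊆ V s) ∧ DiscreteFam V

/-- `alph V U` is the least `s` with `U ⊆ V s`, or `⊤` if there is none. -/

def alph {X S : Type} [LinearOrder S] [WellFoundedLT S] (V : S → Set X)
    (U : Set X) : WithTop S :=
  if h : {s : S | U ⊆ V s}.Nonempty then
    ↑((IsWellFounded.wf (r := ((· < ·) : S → S → Prop))).min {s : S | U ⊆ V s} h)
  else ⊤

/-- The discretization of `V` with respect to `𝒰`:
`D s = X \ ⋃ {U ∈ 𝒰 : α(U) ≠ s}`. -/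
def Dset {X S : Type} [LinearOrder S] [WellFoundedLT S] (𝒰 : Set (Set X))
    (V : S → Set X) (s : S) : Set X :=
  univ \ ⋃₀ {U | U ∈ 𝒰 ∧ alph V U ≠ ↑s}

/-- If for every `x ∈ V s` some cover `𝒰_n` has `st(x,𝒰_n) ⊆ V s`, then the union of the
discretizations `D(𝒱,𝒰_n)` covers `X`. -/
theorem stmt15 (X S : Type) [TopologicalSpace X] [LinearOrder S] [WellFoundedLT S]
    (V : S → Set X) (hVopen : ∀ s, IsOpen (V s)) (hVcov : ⋃ s, V s = univ)
    (u : ℕ → Set (Set X)) (hu : ∀ n, IsOpenCover (u n))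
    (hstar : ∀ (x : X) (s : S), x ∈ V s → ∃ n, ptStar x (u n) ⊆ V s) :
    ∀ x : X, ∃ (n : ℕ) (s : S), x ∈ Dset (u n) V s := by
  intro x
  -- x lies in some V s; take the least such s
  have hx : x ∈ ⋃ s, V s := by rw [hVcov]; trivial
  obtain ⟨s₀, hs₀⟩ := mem_iUnion.mp hx
  have hne : {s : S | x ∈ V s}.Nonempty := ⟨s₀, hs₀⟩
  set wf := (IsWellFounded.wf (r := ((· < ·) : S → S → Prop)))
  set s := wf.min {s : S | x ∈ V s} hne with hs_def
  have hxs : x ∈ V s := wf.min_mem _ hne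
  have hsmin : ∀ t, x ∈ V t → ¬ t < s := fun t ht => wf.not_lt_min _ ht
  obtain ⟨n, hn⟩ := hstar x s hxs
  refine ⟨n, s, ?_⟩
  constructor
  · trivial
  · rintro ⟨U, ⟨hU𝒰, hUne⟩, hxU⟩
    apply hUne
    have hUsub : U ⊆ V s := fun y hy => hn ⟨U, ⟨hU𝒰, hxU⟩, hy⟩
    have hne2 : {t : S | U ⊆ V t}.Nonempty := ⟨s, hUsub⟩
    rw [alph, dif_pos hne2]
    have hmem : wf.min {t : S | U ⊆ V t} hne2 ∈ {t : S | U ⊆ V t} := wf.min_mem _ hne2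
    have h1 : ¬ s < wf.min {t : S | U ⊆ V t} hne2 := wf.not_lt_min _ hUsub
    have h2 : ¬ wf.min {t : S | U ⊆ V t} hne2 < s := hsmin _ (hmem hxU)
    have : wf.min {t : S | U ⊆ V t} hne2 = s := le_antisymm (not_lt.mp h1) (not_lt.mp h2)
    exact_mod_cast this
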